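/- Let n be a positive integer, 0 ≤ e < 1 and β ≥ 0. Suppose y: ℝ → ℝ² is 2π-periodic, continuously differentiable, and orthogonal to all trigonometric functions of degree at most n, i.e., ∫₀^{2π} y(t)·cos(kt) dt = 0 and ∫₀^{2π} y(t)·sin(kt) dt = 0 (componentwise) for every integer 0 ≤ k ≤ n. Then Q_{β,e}(y) ≥ (n² − 1 + 1/(1+e) − (3√2−1)(β+1)/(2(1−e)))·∫₀^{2π}|y(t)|² dt. In particular, Q_{β,e}(y) ≥ 0 whenever β < (2/(3√2−1))·(n² − e/(1+e))·(1−e) − 1. -/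

import Mathlib

open MeasureTheory Real Set intervalIntegral AddCircle Complex

noncomputable section EulerProofAux

local notation "T" => 2 * Real.pi

instance fact_two_pi_pos : Fact ((0:ℝ) < 2 * Real.pi) := ⟨Real.two_pi_pos⟩

lemma liftIco_eqOn {g : ℝ → ℂ} (hper : ∀ t, g (t + T) = g t) :
    ∀ x ∈ Icc (0:ℝ) (0 + T), AddCircle.liftIco T 0 g ↑x = g x := by
  intro x hx
  rcases eq_or_lt_of_le hx.2 with h | h
  · have h0 : ((x : ℝ) : AddCircle T) = ((0 : ℝ) : AddCircle T) := by
      rw [h]; simpa using AddCircle.coe_add_period T 0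
    have h1 : (0:ℝ) ∈ Ico (0:ℝ) (0 + T) := ⟨le_refl 0, by simpa using Real.two_pi_pos⟩
    rw [h0, AddCircle.liftIco_coe_apply h1, h]
    have := hper 0
    rw [zero_add] at this ⊢
    exact this.symm
  · exact AddCircle.liftIco_coe_apply ⟨hx.1, h⟩

lemma parseval_aux (g : ℝ → ℂ) (hg : Continuous g) (hper : ∀ t, g (t + T) = g t) :
    Summable (fun k : ℤ => ‖fourierCoeff (AddCircle.liftIco T 0 g) k‖^2) ∧
    (∫ t in (0:ℝ)..T, ‖g t‖^2) =
      T * ∑' k : ℤ, ‖fourierCoeff (AddCircle.liftIco T 0 g) k‖^2 := by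
  have hcont : Continuous (AddCircle.liftIco T 0 g) := by
    exact AddCircle.liftIco_continuous (hper 0).symm hg.continuousOn
  set Fc : C(AddCircle T, ℂ) := ⟨_, hcont⟩ with hFc
  have htoLp := ContinuousMap.coeFn_toLp (𝕜 := ℂ)
    (haarAddCircle : Measure (AddCircle T)) (p := 2) Fc
  have hcoeff : ∀ k : ℤ, fourierCoeff (↑↑((ContinuousMap.toLp 2 haarAddCircle ℂ) Fc)) k
      = fourierCoeff (AddCircle.liftIco T 0 g) k := fun k => fourierCoeff_toLp Fc k
  have hpar := tsum_sq_fourierCoeff ((ContinuousMap.toLp 2 haarAddCircle ℂ) Fc)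
  -- summability
  have hsum : Summable (fun k : ℤ => ‖fourierCoeff (AddCircle.liftIco T 0 g) k‖^2) := by
    have hmem := lp.memℓp (fourierBasis.repr ((ContinuousMap.toLp 2 haarAddCircle ℂ) Fc))
    have := hmem.summable (by norm_num : (0:ℝ) < (2 : ENNReal).toReal)
    refine this.congr fun k => ?_
    rw [fourierBasis_repr]
    rw [hcoeff k]
    norm_num
  refine ⟨hsum, ?_⟩
  -- integral identity
  have h1 : (∫ t : AddCircle T, ‖((ContinuousMap.toLp 2 haarAddCircle ℂ) Fc : AddCircle T → ℂ) t‖^2 ∂haarAddCircle)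
      = ∫ t : AddCircle T, ‖AddCircle.liftIco T 0 g t‖^2 ∂haarAddCircle := by
    refine integral_congr_ae ?_
    filter_upwards [htoLp] with x hx
    rw [hx]; rfl
  have h2 : (∫ t in (0:ℝ)..(0 + T), ‖AddCircle.liftIco T 0 g ↑t‖^2)
      = ∫ b : AddCircle T, ‖AddCircle.liftIco T 0 g b‖^2 := by
    exact AddCircle.intervalIntegral_preimage T 0 (fun b => ‖AddCircle.liftIco T 0 g b‖^2)
  have h3 : (∫ b : AddCircle T, ‖AddCircle.liftIco T 0 g b‖^2)
      = T * ∫ b : AddCircle T, ‖AddCircle.liftIco T 0 g b‖^2 ∂haarAddCircle := by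
    rw [AddCircle.volume_eq_smul_haarAddCircle, MeasureTheory.integral_smul_measure,
      ENNReal.toReal_ofReal Real.two_pi_pos.le, smul_eq_mul]
  have h4 : (∫ t in (0:ℝ)..(0 + T), ‖AddCircle.liftIco T 0 g ↑t‖^2)
      = ∫ t in (0:ℝ)..T, ‖g t‖^2 := by
    rw [zero_add]
    refine intervalIntegral.integral_congr fun x hx => ?_
    rw [liftIco_eqOn hper x (by simpa [uIcc_of_le Real.two_pi_pos.le] using hx)]
  rw [← h4, h2, h3]
  congr 1
  rw [← h1, ← hpar]
  exact tsum_congr fun k => by rw [hcoeff k]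


lemma coeff_integral (g : ℝ → ℂ) (hper : ∀ t, g (t + T) = g t) (k : ℤ) :
    fourierCoeff (AddCircle.liftIco T 0 g) k
      = (1 / T : ℝ) • ∫ t in (0:ℝ)..T, fourier (-k) (t : AddCircle T) • g t := by
  rw [fourierCoeff_eq_intervalIntegral (AddCircle.liftIco T 0 g) k 0]
  have h1 : (∫ x in (0:ℝ)..(0 + T), fourier (-k) (x : AddCircle T) • AddCircle.liftIco T 0 g ↑x)
      = ∫ x in (0:ℝ)..(0 + T), fourier (-k) (x : AddCircle T) • g x := by
    refine intervalIntegral.integral_congr fun x hx => ?_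
    rw [uIcc_of_le (by positivity : (0:ℝ) ≤ 0 + T)] at hx
    rw [liftIco_eqOn hper x hx]
  rw [h1, zero_add]

lemma coeff_deriv (g : ℝ → ℂ) (hg : ContDiff ℝ 1 g) (hper : ∀ t, g (t + T) = g t) (k : ℤ) :
    ‖fourierCoeff (AddCircle.liftIco T 0 (deriv g)) k‖^2
      = (k:ℝ)^2 * ‖fourierCoeff (AddCircle.liftIco T 0 g) k‖^2 := by
  have hdiff : ∀ x ∈ uIcc (0:ℝ) (0 + T), HasDerivAt g (deriv g x) x :=
    fun x _ => (hg.differentiable one_ne_zero x).hasDerivAt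
  have hint : IntervalIntegrable (deriv g) volume 0 (0 + T) :=
    ((hg.continuous_deriv le_rfl)).intervalIntegrable _ _
  have hper' : ∀ t, deriv g (t + T) = deriv g t := by
    intro t
    have hgg : g = fun s => g (s + T) := funext fun s => (hper s).symm
    conv_rhs => rw [hgg]
    rw [deriv_comp_add_const]
  rcases eq_or_ne k 0 with rfl | hk
  · have h0 : fourierCoeff (AddCircle.liftIco T 0 (deriv g)) 0 = 0 := by
      rw [coeff_integral (deriv g) hper' 0]
      have : (∫ t in (0:ℝ)..T, fourier (-(0:ℤ)) (t : AddCircle T) • deriv g t)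
          = ∫ t in (0:ℝ)..T, deriv g t := by
        refine intervalIntegral.integral_congr fun x _ => ?_
        simp
      rw [this, intervalIntegral.integral_deriv_eq_sub
        (fun x _ => hg.differentiable one_ne_zero x) (by simpa using hint)]
      have := hper 0
      rw [zero_add] at this
      rw [this, sub_self, smul_zero]
    rw [h0]
    simp
  · have hab : (0:ℝ) < 0 + T := lt_add_of_pos_right 0 Real.two_pi_pos
    have hEq := fourierCoeffOn_of_hasDerivAt hab hk hdiff hint
    rw [← fourierCoeff_liftIco_eq (a := 0) g k, ← fourierCoeff_liftIco_eq (a := 0) (deriv g) k] at hEq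
    have hper0 : g (0 + T) - g 0 = 0 := by rw [hper 0, sub_self]
    have hT' : ((0 + T : ℝ) : ℂ) - ((0:ℝ):ℂ) = ((2:ℂ) * (Real.pi:ℂ)) := by push_cast; ring
    rw [hper0, mul_zero, zero_sub, hT'] at hEq
    set cF := fourierCoeff (AddCircle.liftIco T 0 g) k
    set cG := fourierCoeff (AddCircle.liftIco T 0 (deriv g)) k
    have hπ : (Real.pi : ℂ) ≠ 0 := by exact_mod_cast Real.pi_ne_zero
    have hkC : (k : ℂ) ≠ 0 := Int.cast_ne_zero.mpr hk
    have hG : cG = Complex.I * k * cF := by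
      rw [hEq]
      field_simp
    rw [hG, norm_mul, norm_mul, mul_pow, mul_pow]
    have hnk : ‖(k:ℂ)‖^2 = (k:ℝ)^2 := by
      rw [← Complex.ofReal_intCast, Complex.norm_real, Real.norm_eq_abs]
      exact sq_abs _
    rw [hnk]
    simp [Complex.norm_I]
    try ring


lemma poincareC (n : ℕ) (g : ℝ → ℂ) (hg : ContDiff ℝ 1 g) (hper : ∀ t, g (t + T) = g t)
    (hvan : ∀ k : ℤ, k.natAbs ≤ n → fourierCoeff (AddCircle.liftIco T 0 g) k = 0) :
    (n:ℝ)^2 * ∫ t in (0:ℝ)..T, ‖g t‖^2 ≤ ∫ t in (0:ℝ)..T, ‖deriv g t‖^2 := by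
  have hper' : ∀ t, deriv g (t + T) = deriv g t := by
    intro t
    have hgg : g = fun s => g (s + T) := funext fun s => (hper s).symm
    conv_rhs => rw [hgg]
    rw [deriv_comp_add_const]
  obtain ⟨hsF, hF⟩ := parseval_aux g hg.continuous hper
  obtain ⟨hsG, hG⟩ := parseval_aux (deriv g) (hg.continuous_deriv le_rfl) hper'
  rw [hF, hG]
  rw [← mul_assoc, mul_comm ((n:ℝ)^2) T, mul_assoc]
  refine mul_le_mul_of_nonneg_left ?_ Real.two_pi_pos.le
  rw [← tsum_mul_left]
  refine Summable.tsum_le_tsum (fun k => ?_) (hsF.mul_left _) hsG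
  rw [coeff_deriv g hg hper k]
  rcases le_or_gt k.natAbs n with h | h
  · rw [hvan k h]
    simp
  · refine mul_le_mul_of_nonneg_right ?_ (by positivity)
    have h1 : ((n:ℝ))^2 ≤ ((k.natAbs : ℝ))^2 := by
      have : (n:ℝ) ≤ (k.natAbs : ℝ) := by exact_mod_cast h.le
      exact pow_le_pow_left₀ (by positivity) this 2
    have h2 : ((k.natAbs : ℝ))^2 = (k:ℝ)^2 := by
      rw [Nat.cast_natAbs, Int.cast_abs]
      exact _root_.sq_abs ((k:ℝ))
    linarith


lemma fourier_neg_coe (k : ℤ) (t : ℝ) :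
    fourier (-k) (t : AddCircle T)
      = ((Real.cos (k * t) : ℝ) : ℂ) - ((Real.sin (k * t) : ℝ) : ℂ) * Complex.I := by
  rw [fourier_coe_apply]
  have h2 : ((Real.cos ((k:ℝ) * t) : ℝ):ℂ) - ((Real.sin ((k:ℝ)*t):ℝ):ℂ) * Complex.I
      = Complex.exp (((-((k:ℝ)*t):ℝ):ℂ) * Complex.I) := by
    rw [Complex.exp_mul_I]
    push_cast
    rw [Complex.cos_neg, Complex.sin_neg]
    ring
  rw [h2]
  congr 1
  have hπ : (Real.pi : ℂ) ≠ 0 := by exact_mod_cast Real.pi_ne_zero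
  push_cast
  field_simp

lemma poincareR (n : ℕ) (f : ℝ → ℝ) (hf : ContDiff ℝ 1 f) (hper : ∀ t, f (t + T) = f t)
    (hco : ∀ k : ℕ, k ≤ n → (∫ t in (0:ℝ)..T, f t * Real.cos (k * t)) = 0)
    (hsi : ∀ k : ℕ, k ≤ n → (∫ t in (0:ℝ)..T, f t * Real.sin (k * t)) = 0) :
    (n:ℝ)^2 * ∫ t in (0:ℝ)..T, (f t)^2 ≤ ∫ t in (0:ℝ)..T, (deriv f t)^2 := by
  set g : ℝ → ℂ := fun t => ((f t : ℝ) : ℂ) with hgdef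
  have hg : ContDiff ℝ 1 g := Complex.ofRealCLM.contDiff.comp hf
  have hperC : ∀ t, g (t + T) = g t := fun t => by simp [hgdef, hper t]
  -- vanishing integrals for all integers with |k| ≤ n
  have hints : ∀ k : ℤ, k.natAbs ≤ n →
      (∫ t in (0:ℝ)..T, f t * Real.cos ((k:ℝ) * t)) = 0 ∧
      (∫ t in (0:ℝ)..T, f t * Real.sin ((k:ℝ) * t)) = 0 := by
    intro k hk
    have hcast : ((k:ℝ)) = ((k.natAbs:ℝ)) ∨ ((k:ℝ)) = -((k.natAbs:ℝ)) := by
      rcases Int.natAbs_eq k with h | h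
      · left; conv_lhs => rw [h]
        push_cast
        rw [Nat.cast_natAbs, Int.cast_abs]
      · right; conv_lhs => rw [h]
        push_cast
        rw [Nat.cast_natAbs, Int.cast_abs]
    rcases hcast with h | h
    · exact ⟨by simp only [h]; exact hco k.natAbs hk, by simp only [h]; exact hsi k.natAbs hk⟩
    · constructor
      · simp only [h, neg_mul, Real.cos_neg]
        exact hco k.natAbs hk
      · simp only [h, neg_mul, Real.sin_neg, mul_neg]
        rw [intervalIntegral.integral_neg, hsi k.natAbs hk, neg_zero]
  -- complex coefficients vanish
  have hvan : ∀ k : ℤ, k.natAbs ≤ n → fourierCoeff (AddCircle.liftIco T 0 g) k = 0 := by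
    intro k hk
    rw [coeff_integral g hperC k]
    have h1 : (∫ t in (0:ℝ)..T, fourier (-k) (t : AddCircle T) • g t)
        = ((∫ t in (0:ℝ)..T, f t * Real.cos ((k:ℝ) * t) : ℝ) : ℂ)
          - ((∫ t in (0:ℝ)..T, f t * Real.sin ((k:ℝ) * t) : ℝ) : ℂ) * Complex.I := by
      have hc : Continuous fun t => f t * Real.cos ((k:ℝ) * t) :=
        (hf.continuous).mul (Real.continuous_cos.comp (continuous_const.mul continuous_id))
      have hs : Continuous fun t => f t * Real.sin ((k:ℝ) * t) :=
        (hf.continuous).mul (Real.continuous_sin.comp (continuous_const.mul continuous_id))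
      rw [← intervalIntegral.integral_ofReal, ← intervalIntegral.integral_ofReal]
      rw [← intervalIntegral.integral_mul_const]
      rw [← intervalIntegral.integral_sub]
      · refine intervalIntegral.integral_congr fun x _ => ?_
        rw [fourier_neg_coe k x]
        simp only [smul_eq_mul, hgdef]
        push_cast
        ring
      · exact (Complex.continuous_ofReal.comp hc).intervalIntegrable _ _
      · exact ((Complex.continuous_ofReal.comp hs).mul continuous_const).intervalIntegrable _ _
    rw [h1, (hints k hk).1, (hints k hk).2]
    simp
  have key := poincareC n g hg hperC hvan
  have hgnorm : ∀ t, ‖g t‖^2 = (f t)^2 := fun t => by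
    rw [hgdef]; simp [Complex.norm_real, Real.norm_eq_abs, _root_.sq_abs]
  have hderiv : ∀ t, deriv g t = ((deriv f t : ℝ) : ℂ) := by
    intro t
    exact ((hf.differentiable one_ne_zero t).hasDerivAt.ofReal_comp).deriv
  have hgnorm' : ∀ t, ‖deriv g t‖^2 = (deriv f t)^2 := fun t => by
    rw [hderiv t]; simp [Complex.norm_real, Real.norm_eq_abs, _root_.sq_abs]
  calc (n:ℝ)^2 * ∫ t in (0:ℝ)..T, (f t)^2
      = (n:ℝ)^2 * ∫ t in (0:ℝ)..T, ‖g t‖^2 := by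
        congr 1; exact (intervalIntegral.integral_congr fun x _ => (hgnorm x).symm)
    _ ≤ ∫ t in (0:ℝ)..T, ‖deriv g t‖^2 := key
    _ = ∫ t in (0:ℝ)..T, (deriv f t)^2 :=
        intervalIntegral.integral_congr fun x _ => hgnorm' x


lemma frac_bound (e β u1 u2 c2 s2 ct : ℝ) (he0 : 0 ≤ e) (he1 : e < 1) (hβ : 0 ≤ β)
    (hcs : c2^2 + s2^2 = 1) (hct : -1 ≤ ct) (hct1 : ct ≤ 1) :
    (1/(1+e) - (β+1)/(1-e)) * (u1^2+u2^2) ≤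
      ((β+3)*(u1^2+u2^2) + 3*(β+1)*((c2*u1+s2*u2)*u1 + (s2*u1-c2*u2)*u2)) / (2*(1+e*ct)) := by
  have h1e : (0:ℝ) < 1 + e := by linarith
  have h1me : (0:ℝ) < 1 - e := by linarith
  have hW2 : ((c2*u1+s2*u2)*u1 + (s2*u1-c2*u2)*u2)^2 ≤ (u1^2+u2^2)^2 := by
    nlinarith [sq_nonneg (c2*(2*u1*u2) - s2*(u1^2-u2^2)), sq_nonneg (c2*(u1^2-u2^2) + s2*(2*u1*u2)),
      sq_nonneg (u1^2-u2^2), sq_nonneg (2*u1*u2)]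
  have hNn : (0:ℝ) ≤ u1^2+u2^2 := by positivity
  have hWge : -(u1^2+u2^2) ≤ (c2*u1+s2*u2)*u1 + (s2*u1-c2*u2)*u2 := by
    nlinarith [sq_nonneg ((u1^2+u2^2) + ((c2*u1+s2*u2)*u1 + (s2*u1-c2*u2)*u2))]
  set N := u1^2 + u2^2 with hN
  set W := (c2*u1+s2*u2)*u1 + (s2*u1-c2*u2)*u2 with hW
  have hD : 0 < 2*(1+e*ct) := by nlinarith
  have hDle : 2*(1+e*ct) ≤ 2*(1+e) := by nlinarith
  have hDge : 2*(1-e) ≤ 2*(1+e*ct) := by nlinarith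
  have hnum : (β+3)*N + 3*(β+1)*W = 2*N + (β+1)*(N+3*W) := by ring
  have bound1 : N/(1+e) ≤ (2*N)/(2*(1+e*ct)) := by
    have h1 : (2*N)/(2*(1+e)) ≤ (2*N)/(2*(1+e*ct)) :=
      div_le_div_of_nonneg_left (by linarith) hD hDle
    have h2 : (2*N)/(2*(1+e)) = N/(1+e) := by
      rw [mul_div_mul_left _ _ (two_ne_zero)]
    linarith
  have bound2 : -((β+1)*N)/(1-e) ≤ ((β+1)*(N+3*W))/(2*(1+e*ct)) := by
    have hBge : -(2*(β+1)*N) ≤ (β+1)*(N+3*W) := by nlinarith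
    have h1 : (-(2*(β+1)*N))/(2*(1+e*ct)) ≤ ((β+1)*(N+3*W))/(2*(1+e*ct)) :=
      (div_le_div_iff_of_pos_right hD).mpr hBge
    have h2 : (-(2*(β+1)*N))/(2*(1-e)) ≤ (-(2*(β+1)*N))/(2*(1+e*ct)) := by
      rw [neg_div, neg_div, neg_le_neg_iff]
      exact div_le_div_of_nonneg_left (by positivity) (by positivity) hDge
    have h3 : (-(2*(β+1)*N))/(2*(1-e)) = -((β+1)*N)/(1-e) := by
      rw [show -(2*(β+1)*N) = 2*(-((β+1)*N)) from by ring, mul_div_mul_left _ _ two_ne_zero]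
    linarith
  have hsplit : (1/(1+e) - (β+1)/(1-e)) * N = N/(1+e) + (-((β+1)*N)/(1-e)) := by
    field_simp
    ring
  calc (1/(1+e) - (β+1)/(1-e)) * N
      = N/(1+e) + (-((β+1)*N)/(1-e)) := hsplit
    _ ≤ (2*N)/(2*(1+e*ct)) + ((β+1)*(N+3*W))/(2*(1+e*ct)) := add_le_add bound1 bound2
    _ = ((β+3)*N + 3*(β+1)*W)/(2*(1+e*ct)) := by
        rw [← add_div, show 2*N + (β+1)*(N+3*W) = (β+3)*N + 3*(β+1)*W from by ring]


/-- The quadratic form associated with the essential part of the linearized Hamiltonian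
system at the elliptic Euler solution with parameters `(β, e)`. -/
noncomputable def eulerQ (β e : ℝ) (z : ℝ → ℝ × ℝ) : ℝ :=
  ∫ t in (0 : ℝ)..(2 * Real.pi),
    (((deriv z t).1 ^ 2 + (deriv z t).2 ^ 2) - ((z t).1 ^ 2 + (z t).2 ^ 2)
      + ((β + 3) * ((z t).1 ^ 2 + (z t).2 ^ 2)
          + 3 * (β + 1) * ((Real.cos (2 * t) * (z t).1 + Real.sin (2 * t) * (z t).2) * (z t).1
              + (Real.sin (2 * t) * (z t).1 - Real.cos (2 * t) * (z t).2) * (z t).2))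
        / (2 * (1 + e * Real.cos t)))

/-- On the orthogonal complement of trigonometric polynomials of degree `≤ n`, the form
`Q_{β,e}` satisfies the lower bound
`Q_{β,e}(y) ≥ (n² − 1 + 1/(1+e) − (3√2−1)(β+1)/(2(1−e)))‖y‖²`; in particular `Q_{β,e}(y) ≥ 0`
when `β < (2/(3√2−1))(n² − e/(1+e))(1−e) − 1`. -/
theorem euler_form_lower_bound (n : ℕ) (hn : 1 ≤ n) (e β : ℝ)
    (he0 : 0 ≤ e) (he1 : e < 1) (hβ : 0 ≤ β)
    (y : ℝ → ℝ × ℝ) (hy : ContDiff ℝ 1 y) (hper : ∀ t, y (t + 2 * Real.pi) = y t)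
    (horth : ∀ k : ℕ, k ≤ n →
      (∫ t in (0 : ℝ)..(2 * Real.pi), (y t).1 * Real.cos ((k : ℝ) * t)) = 0 ∧
      (∫ t in (0 : ℝ)..(2 * Real.pi), (y t).2 * Real.cos ((k : ℝ) * t)) = 0 ∧
      (∫ t in (0 : ℝ)..(2 * Real.pi), (y t).1 * Real.sin ((k : ℝ) * t)) = 0 ∧
      (∫ t in (0 : ℝ)..(2 * Real.pi), (y t).2 * Real.sin ((k : ℝ) * t)) = 0) :
    eulerQ β e y ≥
      ((n : ℝ) ^ 2 - 1 + 1 / (1 + e) - (3 * Real.sqrt 2 - 1) * (β + 1) / (2 * (1 - e)))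
        * ∫ t in (0 : ℝ)..(2 * Real.pi), ((y t).1 ^ 2 + (y t).2 ^ 2) ∧
    (β < 2 / (3 * Real.sqrt 2 - 1) * ((n : ℝ) ^ 2 - e / (1 + e)) * (1 - e) - 1 →
      0 ≤ eulerQ β e y) := by
  -- basic continuity facts
  have hyc : Continuous y := hy.continuous
  have hdc : Continuous (deriv y) := hy.continuous_deriv le_rfl
  have hy1 : ContDiff ℝ 1 (fun t => (y t).1) := (contDiff_fst).comp hy
  have hy2 : ContDiff ℝ 1 (fun t => (y t).2) := (contDiff_snd).comp hy
  have hd1 : ∀ t, deriv (fun s => (y s).1) t = (deriv y t).1 := by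
    intro t
    have h := (hy.differentiable one_ne_zero t).hasDerivAt
    exact (by simpa using h.hasFDerivAt.fst.hasDerivAt : HasDerivAt (fun s => (y s).1) (deriv y t).1 t).deriv
  have hd2 : ∀ t, deriv (fun s => (y s).2) t = (deriv y t).2 := by
    intro t
    have h := (hy.differentiable one_ne_zero t).hasDerivAt
    exact (by simpa using h.hasFDerivAt.snd.hasDerivAt : HasDerivAt (fun s => (y s).2) (deriv y t).2 t).deriv
  -- Poincaré for both components
  have P1 := poincareR n (fun t => (y t).1) hy1 (fun t => congrArg Prod.fst (hper t))
    (fun k hk => (horth k hk).1) (fun k hk => (horth k hk).2.2.1)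
  have P2 := poincareR n (fun t => (y t).2) hy2 (fun t => congrArg Prod.snd (hper t))
    (fun k hk => (horth k hk).2.1) (fun k hk => (horth k hk).2.2.2)
  rw [show (∫ t in (0:ℝ)..T, (deriv (fun s => (y s).1) t)^2) = ∫ t in (0:ℝ)..T, ((deriv y t).1)^2 from
    intervalIntegral.integral_congr fun x _ => by rw [hd1 x]] at P1
  rw [show (∫ t in (0:ℝ)..T, (deriv (fun s => (y s).2) t)^2) = ∫ t in (0:ℝ)..T, ((deriv y t).2)^2 from
    intervalIntegral.integral_congr fun x _ => by rw [hd2 x]] at P2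
  -- denominators
  have hden : ∀ t : ℝ, 0 < 1 + e * Real.cos t := by
    intro t
    have h1 : |e * Real.cos t| ≤ e := by
      rw [abs_mul, _root_.abs_of_nonneg he0]
      nlinarith [Real.abs_cos_le_one t, abs_nonneg (Real.cos t)]
    have := abs_le.mp h1
    linarith
  have h1e : (0:ℝ) < 1 + e := by linarith
  have h1me : (0:ℝ) < 1 - e := by linarith
  -- continuity of the pieces
  have hcd1 : Continuous fun t => (deriv y t).1 := continuous_fst.comp hdc
  have hcd2 : Continuous fun t => (deriv y t).2 := continuous_snd.comp hdc
  have hcy1 : Continuous fun t => (y t).1 := continuous_fst.comp hyc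
  have hcy2 : Continuous fun t => (y t).2 := continuous_snd.comp hyc
  have hcP : Continuous fun t => (deriv y t).1^2 + (deriv y t).2^2 := by fun_prop
  have hcN : Continuous fun t => (y t).1^2 + (y t).2^2 := by fun_prop
  have hcnum : Continuous fun t =>
      (β + 3) * ((y t).1 ^ 2 + (y t).2 ^ 2)
        + 3 * (β + 1) * ((Real.cos (2 * t) * (y t).1 + Real.sin (2 * t) * (y t).2) * (y t).1
            + (Real.sin (2 * t) * (y t).1 - Real.cos (2 * t) * (y t).2) * (y t).2) := by fun_prop
  have hcden : Continuous fun t => 2 * (1 + e * Real.cos t) := by fun_prop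
  have hcR : Continuous fun t =>
      ((β + 3) * ((y t).1 ^ 2 + (y t).2 ^ 2)
        + 3 * (β + 1) * ((Real.cos (2 * t) * (y t).1 + Real.sin (2 * t) * (y t).2) * (y t).1
            + (Real.sin (2 * t) * (y t).1 - Real.cos (2 * t) * (y t).2) * (y t).2))
        / (2 * (1 + e * Real.cos t)) :=
    hcnum.div hcden (fun t => by have := hden t; positivity)
  have hcQ : Continuous fun t =>
      (((deriv y t).1 ^ 2 + (deriv y t).2 ^ 2) - ((y t).1 ^ 2 + (y t).2 ^ 2)
        + ((β + 3) * ((y t).1 ^ 2 + (y t).2 ^ 2)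
            + 3 * (β + 1) * ((Real.cos (2 * t) * (y t).1 + Real.sin (2 * t) * (y t).2) * (y t).1
                + (Real.sin (2 * t) * (y t).1 - Real.cos (2 * t) * (y t).2) * (y t).2))
          / (2 * (1 + e * Real.cos t))) := by
    exact ((hcP.sub hcN).add hcR)
  set c0 : ℝ := 1/(1+e) - (β+1)/(1-e) with hc0
  have hcLow : Continuous fun t =>
      ((deriv y t).1^2 + (deriv y t).2^2) - ((y t).1^2 + (y t).2^2)
        + c0 * ((y t).1^2 + (y t).2^2) := by fun_prop
  -- pointwise bound
  have hpt : ∀ t ∈ Icc (0:ℝ) T,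
      ((deriv y t).1^2 + (deriv y t).2^2) - ((y t).1^2 + (y t).2^2)
        + c0 * ((y t).1^2 + (y t).2^2)
      ≤ (((deriv y t).1 ^ 2 + (deriv y t).2 ^ 2) - ((y t).1 ^ 2 + (y t).2 ^ 2)
        + ((β + 3) * ((y t).1 ^ 2 + (y t).2 ^ 2)
            + 3 * (β + 1) * ((Real.cos (2 * t) * (y t).1 + Real.sin (2 * t) * (y t).2) * (y t).1
                + (Real.sin (2 * t) * (y t).1 - Real.cos (2 * t) * (y t).2) * (y t).2))
          / (2 * (1 + e * Real.cos t))) := by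
    intro t _
    have key := frac_bound e β ((y t).1) ((y t).2) (Real.cos (2*t)) (Real.sin (2*t)) (Real.cos t)
      he0 he1 hβ (by rw [add_comm]; exact Real.sin_sq_add_cos_sq (2*t))
      (Real.neg_one_le_cos t) (Real.cos_le_one t)
    rw [hc0]
    linarith
  -- integral inequality
  have hmono : (∫ t in (0:ℝ)..T,
      (((deriv y t).1^2 + (deriv y t).2^2) - ((y t).1^2 + (y t).2^2)
        + c0 * ((y t).1^2 + (y t).2^2))) ≤ eulerQ β e y := by
    unfold eulerQ
    exact intervalIntegral.integral_mono_on Real.two_pi_pos.le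
      (hcLow.intervalIntegrable _ _) (hcQ.intervalIntegrable _ _) hpt
  -- split the lower integral
  have hIlow : (∫ t in (0:ℝ)..T,
      (((deriv y t).1^2 + (deriv y t).2^2) - ((y t).1^2 + (y t).2^2)
        + c0 * ((y t).1^2 + (y t).2^2)))
      = ((∫ t in (0:ℝ)..T, ((deriv y t).1^2)) + (∫ t in (0:ℝ)..T, ((deriv y t).2^2)))
        + (c0 - 1) * ((∫ t in (0:ℝ)..T, ((y t).1^2)) + (∫ t in (0:ℝ)..T, ((y t).2^2))) := by
    rw [show (fun t => (((deriv y t).1^2 + (deriv y t).2^2) - ((y t).1^2 + (y t).2^2)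
        + c0 * ((y t).1^2 + (y t).2^2)))
      = (fun t => ((deriv y t).1^2 + (deriv y t).2^2) + (c0-1) * ((y t).1^2 + (y t).2^2))
      from funext fun t => by ring]
    rw [intervalIntegral.integral_add (g := fun t => (c0-1) * ((y t).1^2 + (y t).2^2)) (hcP.intervalIntegrable _ _)
      ((continuous_const.mul hcN).intervalIntegrable _ _)]
    rw [intervalIntegral.integral_add (f := fun t => (deriv y t).1^2) (g := fun t => (deriv y t).2^2) ((hcd1.pow 2).intervalIntegrable _ _)
      ((hcd2.pow 2).intervalIntegrable _ _)]
    rw [intervalIntegral.integral_const_mul]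
    rw [intervalIntegral.integral_add (f := fun t => (y t).1^2) (g := fun t => (y t).2^2) ((hcy1.pow 2).intervalIntegrable _ _)
      ((hcy2.pow 2).intervalIntegrable _ _)]
  have hN0 : 0 ≤ ∫ t in (0:ℝ)..T, ((y t).1^2 + (y t).2^2) := by
    apply intervalIntegral.integral_nonneg Real.two_pi_pos.le
    intro u _
    positivity
  have hNsplit : (∫ t in (0:ℝ)..T, ((y t).1^2 + (y t).2^2))
      = (∫ t in (0:ℝ)..T, ((y t).1^2)) + (∫ t in (0:ℝ)..T, ((y t).2^2)) :=
    intervalIntegral.integral_add ((hcy1.pow 2).intervalIntegrable _ _)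
      ((hcy2.pow 2).intervalIntegrable _ _)
  -- main lower bound with constant n^2 - 1 + c0
  have hmain : ((n:ℝ)^2 - 1 + c0) * (∫ t in (0:ℝ)..T, ((y t).1^2 + (y t).2^2))
      ≤ eulerQ β e y := by
    refine le_trans ?_ hmono
    rw [hIlow, hNsplit]
    nlinarith [P1, P2]
  -- comparison of constants
  have hs1 : (1:ℝ) ≤ Real.sqrt 2 := by
    rw [show (1:ℝ) = Real.sqrt 1 from (Real.sqrt_one).symm]
    exact Real.sqrt_le_sqrt (by norm_num)
  have h3s : (0:ℝ) < 3 * Real.sqrt 2 - 1 := by linarith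
  have hconst : ((n : ℝ) ^ 2 - 1 + 1 / (1 + e) - (3 * Real.sqrt 2 - 1) * (β + 1) / (2 * (1 - e)))
      ≤ ((n:ℝ)^2 - 1 + c0) := by
    rw [hc0]
    have h2 : (β+1)/(1-e) ≤ (3 * Real.sqrt 2 - 1) * (β + 1) / (2 * (1 - e)) := by
      rw [div_le_div_iff₀ h1me (by positivity)]
      nlinarith [mul_nonneg (mul_nonneg (by linarith : (0:ℝ) ≤ 3*Real.sqrt 2 - 3)
        (by linarith : (0:ℝ) ≤ β+1)) (by linarith : (0:ℝ) ≤ 1-e)]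
    linarith
  have hfirst : eulerQ β e y ≥
      ((n : ℝ) ^ 2 - 1 + 1 / (1 + e) - (3 * Real.sqrt 2 - 1) * (β + 1) / (2 * (1 - e)))
        * ∫ t in (0 : ℝ)..(2 * Real.pi), ((y t).1 ^ 2 + (y t).2 ^ 2) := by
    refine le_trans ?_ hmain
    exact mul_le_mul_of_nonneg_right hconst hN0
  refine ⟨hfirst, ?_⟩
  -- second conclusion
  intro hβ2
  set s := Real.sqrt 2 with hsdef
  have h5 : (3*s-1)*(β+1) < 2*((n:ℝ)^2 - e/(1+e))*(1-e) := by
    have h6 : (3*s-1)*β < (3*s-1)*(2/(3*s-1)*((n:ℝ)^2 - e/(1+e))*(1-e) - 1) :=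
      mul_lt_mul_of_pos_left hβ2 h3s
    have h7 : (3*s-1)*(2/(3*s-1)*((n:ℝ)^2 - e/(1+e))*(1-e) - 1)
        = 2*((n:ℝ)^2 - e/(1+e))*(1-e) - (3*s-1) := by
      field_simp
    rw [h7] at h6
    linarith
  have h8 : (3*s-1)*(β+1)/(2*(1-e)) < (n:ℝ)^2 - e/(1+e) := by
    rw [div_lt_iff₀ (by positivity)]
    nlinarith
  have h9 : -1 + 1/(1+e) = - (e/(1+e)) := by
    field_simp
    ring
  have hCpos : 0 ≤ ((n : ℝ) ^ 2 - 1 + 1 / (1 + e) - (3 * s - 1) * (β + 1) / (2 * (1 - e))) := by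
    linarith
  calc (0:ℝ) ≤ ((n : ℝ) ^ 2 - 1 + 1 / (1 + e) - (3 * s - 1) * (β + 1) / (2 * (1 - e)))
        * ∫ t in (0 : ℝ)..(2 * Real.pi), ((y t).1 ^ 2 + (y t).2 ^ 2) :=
      mul_nonneg hCpos hN0
    _ ≤ eulerQ β e y := hfirst


end EulerProofAux
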